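/- For every p ∈ [0, 1] and every λ ∈ ℝ, (1 − p)·e^{−λp} + p·e^{λ(1−p)} ≤ e^{λ²/8}. -/

import Mathlib

open Real

private lemma bernoulli_log_aux (p : ℝ) (hp0 : 0 < p) (hp1 : p ≤ 1) (lam : ℝ) :
    Real.log (1 - p + p * Real.exp lam) ≤ p * lam + lam ^ 2 / 8 := by
  set D : ℝ → ℝ := fun x => 1 - p + p * Real.exp x with hDdef
  have hD : ∀ x : ℝ, 0 < D x := fun x => by
    have := Real.exp_pos x
    simp only [hDdef]
    nlinarith
  set f : ℝ → ℝ := fun x => Real.log (D x) - p * x - x ^ 2 / 8 with hfdef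
  set g : ℝ → ℝ := fun x => p * Real.exp x / D x - p - x / 4 with hgdef
  have hDd : ∀ x : ℝ, HasDerivAt D (p * Real.exp x) x := fun x => by
    exact ((Real.hasDerivAt_exp x).const_mul p).const_add (1 - p)
  have hfd : ∀ x : ℝ, HasDerivAt f (g x) x := by
    intro x
    have h2 : HasDerivAt (fun x => Real.log (D x)) (p * Real.exp x / D x) x :=
      (hDd x).log (hD x).ne'
    have h3 : HasDerivAt (fun x : ℝ => p * x) p x := by
      simpa using (hasDerivAt_id x).const_mul p
    have h4 : HasDerivAt (fun x : ℝ => x ^ 2 / 8) (2 * x ^ 1 / 8) x :=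
      (hasDerivAt_pow 2 x).div_const 8
    have := (h2.sub h3).sub h4
    refine this.congr_deriv ?_
    simp only [hgdef]
    ring
  have hgd : ∀ x : ℝ, HasDerivAt g
      ((p * Real.exp x * D x - p * Real.exp x * (p * Real.exp x)) / (D x) ^ 2 - 1 / 4) x := by
    intro x
    have h1 : HasDerivAt (fun x => p * Real.exp x / D x)
        ((p * Real.exp x * D x - p * Real.exp x * (p * Real.exp x)) / (D x) ^ 2) x :=
      ((Real.hasDerivAt_exp x).const_mul p).div (hDd x) (hD x).ne'
    have h2 : HasDerivAt (fun x : ℝ => x / 4) (1 / 4 : ℝ) x := by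
      simpa using (hasDerivAt_id x).div_const 4
    exact (h1.sub_const p).sub h2
  have hg_nonpos : ∀ x : ℝ, deriv g x ≤ 0 := by
    intro x
    rw [(hgd x).deriv]
    rw [sub_nonpos, div_le_div_iff₀ (pow_pos (hD x) 2) (by norm_num : (0:ℝ) < 4)]
    have hex := Real.exp_pos x
    simp only [hDdef]
    nlinarith [sq_nonneg (1 - p - p * Real.exp x)]
  have hg_anti : Antitone g := antitone_of_deriv_nonpos
    (fun x => (hgd x).differentiableAt) hg_nonpos
  have hg0 : g 0 = 0 := by
    simp only [hgdef, hDdef, Real.exp_zero, mul_one]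
    have : 1 - p + p = 1 := by ring
    rw [this]
    ring
  have hf0 : f 0 = 0 := by
    simp [hfdef, hDdef]
  have key : f lam ≤ 0 := by
    rcases le_total 0 lam with h | h
    · have : AntitoneOn f (Set.Ici 0) := by
        apply antitoneOn_of_hasDerivWithinAt_nonpos (convex_Ici 0)
          (fun x _ => (hfd x).continuousAt.continuousWithinAt)
          (fun x hx => (hfd x).hasDerivWithinAt)
        intro x hx
        rw [interior_Ici] at hx
        rw [← hg0]
        exact hg_anti hx.le
      calc f lam ≤ f 0 := this Set.self_mem_Ici h h
        _ = 0 := hf0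
    · have : MonotoneOn f (Set.Iic 0) := by
        apply monotoneOn_of_hasDerivWithinAt_nonneg (convex_Iic 0)
          (fun x _ => (hfd x).continuousAt.continuousWithinAt)
          (fun x hx => (hfd x).hasDerivWithinAt)
        intro x hx
        rw [interior_Iic] at hx
        rw [← hg0]
        exact hg_anti hx.le
      calc f lam ≤ f 0 := this h Set.self_mem_Iic h
        _ = 0 := hf0
  have : Real.log (D lam) ≤ p * lam + lam ^ 2 / 8 := by
    have := key
    simp only [hfdef] at this
    linarith
  simpa [hDdef] using this

/-- For every `p ∈ [0,1]` and every real `λ`,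
`(1 − p)·e^{−λp} + p·e^{λ(1−p)} ≤ e^{λ²/8}`. -/
theorem bernoulli_mgf_bound (p : ℝ) (hp0 : 0 ≤ p) (hp1 : p ≤ 1) (lam : ℝ) :
    (1 - p) * Real.exp (-lam * p) + p * Real.exp (lam * (1 - p)) ≤
      Real.exp (lam ^ 2 / 8) := by
  rcases eq_or_lt_of_le hp0 with h | h
  · subst h
    simp only [sub_zero, mul_zero, neg_mul, neg_zero, Real.exp_zero, one_mul, zero_mul, add_zero]
    exact Real.one_le_exp (by positivity)
  · have hlog := bernoulli_log_aux p h hp1 lam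
    have hDpos : 0 < 1 - p + p * Real.exp lam := by
      have := Real.exp_pos lam; nlinarith
    have hle : 1 - p + p * Real.exp lam ≤ Real.exp (p * lam + lam ^ 2 / 8) :=
      (Real.log_le_iff_le_exp hDpos).mp hlog
    have hrw : (1 - p) * Real.exp (-lam * p) + p * Real.exp (lam * (1 - p)) =
        Real.exp (-lam * p) * (1 - p + p * Real.exp lam) := by
      rw [show lam * (1 - p) = -lam * p + lam by ring, Real.exp_add]
      ring
    rw [hrw]
    calc Real.exp (-lam * p) * (1 - p + p * Real.exp lam)
        ≤ Real.exp (-lam * p) * Real.exp (p * lam + lam ^ 2 / 8) := by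
          exact mul_le_mul_of_nonneg_left hle (Real.exp_pos _).le
      _ = Real.exp (lam ^ 2 / 8) := by
          rw [← Real.exp_add]; ring_nf
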